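/- If f is logconcave, then for any 0 ≤ a < b ≤ 1 and any ε ≥ 0 with b + ε ≤ 1, the conditional mean satisfies φ(a + ε, b + ε) ≤ φ(a, b) + ε. -/

import Mathlib

open MeasureTheory Set

/-- The mean of the density `f` conditional on the interval `(a, b)`. -/
noncomputable def condMean (g : ℝ → ℝ) (a b : ℝ) : ℝ :=
  (∫ t in a..b, t * g t) / (∫ t in a..b, g t)

/-- A strictly positive function on `[0,1]` is logconcave if its log is concave there. -/
def LogConcaveOn01 (g : ℝ → ℝ) : Prop :=
  ConcaveOn ℝ (Icc (0:ℝ) 1) fun t => Real.log (g t)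

/-- translation property of conditional means for logconcave densities. -/
theorem stmt_12 (f : ℝ → ℝ)
    (hf_cont : Continuous f) (hf_pos : ∀ t ∈ Icc (0:ℝ) 1, 0 < f t)
    (hf_lc : LogConcaveOn01 f)
    (a b ε : ℝ) (ha : 0 ≤ a) (hab : a < b) (hb : b ≤ 1)
    (hε : 0 ≤ ε) (hbε : b + ε ≤ 1) :
    condMean f (a + ε) (b + ε) ≤ condMean f a b + ε := by
  set G : ℝ → ℝ := fun t => f (t + ε) with hG
  have hGcont : Continuous G := hf_cont.comp (continuous_id.add continuous_const)
  have hab' : a ≤ b := hab.le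
  have hfpos' : ∀ t ∈ Icc a b, 0 < f t := fun t ht =>
    hf_pos t ⟨le_trans ha ht.1, le_trans ht.2 (by linarith)⟩
  have hGpos' : ∀ t ∈ Icc a b, 0 < G t := fun t ht =>
    hf_pos (t + ε) ⟨by linarith [ht.1], by linarith [ht.2]⟩
  -- ratio monotonicity from logconcavity
  have hratio : ∀ s t : ℝ, a ≤ s → s ≤ t → t ≤ b → G t * f s ≤ G s * f t := by
    intro s t hs hst htb
    rcases eq_or_lt_of_le hst with rfl | hst'
    · exact le_of_eq (by ring)
    · have hs01 : s ∈ Icc (0:ℝ) 1 := ⟨by linarith, by linarith⟩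
      have htε : t + ε ∈ Icc (0:ℝ) 1 := ⟨by linarith, by linarith⟩
      have hden : 0 < t - s + ε := by linarith
      set lam : ℝ := ε / (t - s + ε) with hlam
      have hlam0 : 0 ≤ lam := div_nonneg hε hden.le
      have hlam1 : 0 ≤ 1 - lam := by
        have : lam ≤ 1 := (div_le_one hden).mpr (by linarith)
        linarith
      have e1 : (1 - lam) • s + lam • (t + ε) = s + ε := by
        simp only [smul_eq_mul, hlam]
        field_simp
        ring
      have e2 : lam • s + (1 - lam) • (t + ε) = t := by
        simp only [smul_eq_mul, hlam]
        field_simp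
        ring
      have h1 := hf_lc.2 hs01 htε hlam1 hlam0 (by ring)
      have h2 := hf_lc.2 hs01 htε hlam0 hlam1 (by ring)
      rw [e1] at h1
      rw [e2] at h2
      simp only [smul_eq_mul] at h1 h2
      have hfs : 0 < f s := hf_pos s hs01
      have hft : 0 < f t := hf_pos t ⟨by linarith, by linarith⟩
      have hfsε : 0 < f (s + ε) := hf_pos (s + ε) ⟨by linarith, by linarith⟩
      have hftε : 0 < f (t + ε) := hf_pos (t + ε) htε
      have hlog : Real.log (f (t + ε) * f s) ≤ Real.log (f (s + ε) * f t) := by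
        rw [Real.log_mul hftε.ne' hfs.ne', Real.log_mul hfsε.ne' hft.ne']
        linarith
      have := Real.exp_le_exp.mpr hlog
      rwa [Real.exp_log (by positivity), Real.exp_log (by positivity)] at this
  have hintf : IntervalIntegrable f volume a b := hf_cont.intervalIntegrable _ _
  have hintG : IntervalIntegrable G volume a b := hGcont.intervalIntegrable _ _
  have hIf : 0 < ∫ t in a..b, f t :=
    intervalIntegral.intervalIntegral_pos_of_pos_on hintf
      (fun t ht => hfpos' t ⟨ht.1.le, ht.2.le⟩) hab
  have hIG : 0 < ∫ t in a..b, G t :=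
    intervalIntegral.intervalIntegral_pos_of_pos_on hintG
      (fun t ht => hGpos' t ⟨ht.1.le, ht.2.le⟩) hab
  set m : ℝ := (∫ t in a..b, t * f t) / (∫ t in a..b, f t) with hm
  have hmul : m * ∫ t in a..b, f t = ∫ t in a..b, t * f t := div_mul_cancel₀ _ hIf.ne'
  have hcid : Continuous fun t : ℝ => t * f t := continuous_id.mul hf_cont
  have hma : a ≤ m := by
    rw [hm, le_div_iff₀ hIf]
    have : ∫ t in a..b, a * f t ≤ ∫ t in a..b, t * f t :=
      intervalIntegral.integral_mono_on hab'
        ((continuous_const.mul hf_cont).intervalIntegrable _ _)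
        (hcid.intervalIntegrable _ _)
        (fun t ht => mul_le_mul_of_nonneg_right ht.1 (hfpos' t ht).le)
    rwa [intervalIntegral.integral_const_mul] at this
  have hmb : m ≤ b := by
    rw [hm, div_le_iff₀ hIf]
    have : ∫ t in a..b, t * f t ≤ ∫ t in a..b, b * f t :=
      intervalIntegral.integral_mono_on hab'
        (hcid.intervalIntegrable _ _)
        ((continuous_const.mul hf_cont).intervalIntegrable _ _)
        (fun t ht => mul_le_mul_of_nonneg_right ht.2 (hfpos' t ht).le)
    rwa [intervalIntegral.integral_const_mul] at this
  have hzero : ∫ t in a..b, (t - m) * f t = 0 := by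
    have expand : ∫ t in a..b, (t - m) * f t
        = (∫ t in a..b, t * f t) - m * ∫ t in a..b, f t := by
      rw [← intervalIntegral.integral_const_mul,
        ← intervalIntegral.integral_sub (g := fun t => m * f t) (hcid.intervalIntegrable _ _)
          ((continuous_const.mul hf_cont).intervalIntegrable _ _)]
      congr 1
      ext t
      ring
    rw [expand, hmul, sub_self]
  have hInt_tG : IntervalIntegrable (fun t => t * G t) volume a b :=
    (continuous_id.mul hGcont).intervalIntegrable _ _
  have hInt_mG : ∀ c : ℝ, IntervalIntegrable (fun t => c * G t) volume a b := fun c =>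
    (continuous_const.mul hGcont).intervalIntegrable _ _
  have hkey : ∫ t in a..b, t * G t ≤ m * ∫ t in a..b, G t := by
    have hfm : 0 < f m := hfpos' m ⟨hma, hmb⟩
    have hGm : 0 < G m := hGpos' m ⟨hma, hmb⟩
    have hpt : ∀ t ∈ Icc a b, ((t - m) * G t) * f m ≤ ((t - m) * f t) * G m := by
      intro t ht
      rcases le_total t m with h | h
      · have := hratio t m ht.1 h hmb
        nlinarith
      · have := hratio m t hma h ht.2
        nlinarith
    have hle : ∫ t in a..b, ((t - m) * G t) * f m ≤ ∫ t in a..b, ((t - m) * f t) * G m :=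
      intervalIntegral.integral_mono_on hab'
        ((((continuous_id.sub continuous_const).mul hGcont).mul continuous_const).intervalIntegrable _ _)
        ((((continuous_id.sub continuous_const).mul hf_cont).mul continuous_const).intervalIntegrable _ _)
        hpt
    rw [intervalIntegral.integral_mul_const, intervalIntegral.integral_mul_const,
      hzero, zero_mul] at hle
    have hneg : ∫ t in a..b, (t - m) * G t ≤ 0 := by nlinarith
    have expand : ∫ t in a..b, (t - m) * G t
        = (∫ t in a..b, t * G t) - m * ∫ t in a..b, G t := by
      rw [← intervalIntegral.integral_const_mul,
        ← intervalIntegral.integral_sub hInt_tG (hInt_mG m)]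
      congr 1
      ext t
      ring
    linarith [expand ▸ hneg]
  -- shift the integrals
  have hs1 : ∫ t in (a + ε)..(b + ε), f t = ∫ t in a..b, G t :=
    (intervalIntegral.integral_comp_add_right f ε).symm
  have hs2 : ∫ t in (a + ε)..(b + ε), t * f t = ∫ t in a..b, (t + ε) * G t :=
    (intervalIntegral.integral_comp_add_right (fun t => t * f t) ε).symm
  have hsplit : ∫ t in a..b, (t + ε) * G t
      = (∫ t in a..b, t * G t) + ε * ∫ t in a..b, G t := by
    rw [← intervalIntegral.integral_const_mul,
      ← intervalIntegral.integral_add hInt_tG (hInt_mG ε)]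
    congr 1
    ext t
    ring
  have hcm : condMean f a b = m := rfl
  rw [condMean, hs1, hs2, hsplit, hcm, div_le_iff₀ hIG]
  have : (m + ε) * ∫ t in a..b, G t = m * (∫ t in a..b, G t) + ε * ∫ t in a..b, G t := by ring
  linarith [hkey]
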